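/- In a completely randomized experiment, the difference-in-means estimator τ̂ = (1/N₁)Σ_{i:T_i=1} Y_i^{obs} − (1/N₀)Σ_{i:T_i=0} Y_i^{obs} is unbiased for the finite population average causal effect: E(τ̂) = τ = (1/N)Σ_{i=1}^N {Y_i(1) − Y_i(0)}. -/

import Mathlib

open Finset

noncomputable section

/-- Completely randomized assignments: vectors in `{0,1}^N` with exactly `N₁` ones. -/
def CRD (N N₁ : ℕ) : Finset (Fin N → Bool) :=
  Finset.univ.filter fun T => (Finset.univ.filter fun i => T i = true).card = N₁

noncomputable def crdExp (N N₁ : ℕ) (f : (Fin N → Bool) → ℝ) : ℝ :=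
  (∑ T ∈ CRD N N₁, f T) / ((CRD N N₁).card : ℝ)

/-- The difference-in-means estimator: the observed outcome is
`Yᵢobs = Tᵢ Yᵢ(1) + (1−Tᵢ) Yᵢ(0)`, and
`τ̂ = (1/N₁) Σ_{Tᵢ=1} Yᵢobs − (1/N₀) Σ_{Tᵢ=0} Yᵢobs`. -/
noncomputable def tauhat (N N₁ : ℕ) (Y1 Y0 : Fin N → ℝ) (T : Fin N → Bool) : ℝ :=
  (∑ i, if T i then Y1 i else 0) / (N₁ : ℝ)
    - (∑ i, if T i then 0 else Y0 i) / ((N - N₁ : ℕ) : ℝ)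

-- composing with an equiv preserves the count of trues
lemma count_comp_equiv {N : ℕ} (e : Fin N ≃ Fin N) (T : Fin N → Bool) :
    (Finset.univ.filter fun x => T (e x) = true).card
      = (Finset.univ.filter fun i => T i = true).card := by
  apply Finset.card_bij (fun x _ => e x)
  · intro a ha; simp_all
  · intro a _ b _ h; exact e.injective h
  · intro b hb; exact ⟨e.symm b, by simp_all⟩

lemma comp_mem_CRD {N N₁ : ℕ} (e : Fin N ≃ Fin N) {T : Fin N → Bool}
    (hT : T ∈ CRD N N₁) : (fun x => T (e x)) ∈ CRD N N₁ := by
  simp only [CRD, Finset.mem_filter, Finset.mem_univ, true_and] at *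
  rw [count_comp_equiv e T]; exact hT

lemma symm_count {N N₁ : ℕ} (i j : Fin N) :
    ((CRD N N₁).filter fun T => T i = true).card
      = ((CRD N N₁).filter fun T => T j = true).card := by
  apply Finset.card_bij (fun T _ => fun x => T (Equiv.swap i j x))
  · intro T hT
    simp only [Finset.mem_filter] at hT ⊢
    exact ⟨comp_mem_CRD _ hT.1, by simpa using hT.2⟩
  · intro a ha b hb h
    funext x
    have := congrFun h (Equiv.swap i j x)
    simpa using this
  · intro b hb
    refine ⟨fun x => b (Equiv.swap i j x), ?_, ?_⟩
    · simp only [Finset.mem_filter] at hb ⊢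
      exact ⟨comp_mem_CRD _ hb.1, by simpa using hb.2⟩
    · funext x; show b _ = b x; rw [Equiv.swap_apply_self]

lemma double_count {N N₁ : ℕ} :
    ∑ i : Fin N, ((CRD N N₁).filter fun T => T i = true).card
      = N₁ * (CRD N N₁).card := by
  have : ∀ i : Fin N, ((CRD N N₁).filter fun T => T i = true).card
      = ∑ T ∈ CRD N N₁, if T i = true then 1 else 0 := by
    intro i; rw [Finset.card_filter]
  simp_rw [this]
  rw [Finset.sum_comm]
  rw [Finset.sum_congr rfl (fun T hT => ?_)]
  · rw [Finset.sum_const, smul_eq_mul, mul_comm]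
  · simp only [CRD, Finset.mem_filter] at hT
    rw [← Finset.card_filter]
    exact hT.2

lemma crd_nonempty {N N₁ : ℕ} (h : N₁ < N) : (CRD N N₁).Nonempty := by
  refine ⟨fun i => decide ((i : Fin N) < ⟨N₁, h⟩), ?_⟩
  simp only [CRD, Finset.mem_filter, Finset.mem_univ, true_and, decide_eq_true_eq]
  have : (Finset.univ.filter fun i : Fin N => i < (⟨N₁, h⟩ : Fin N)) = Finset.Iio ⟨N₁, h⟩ := by
    ext x; simp
  rw [this, Fin.card_Iio]

/-- In a completely randomized experiment, the difference-in-means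
estimator is unbiased for the average causal effect
`τ = (1/N) Σ (Yᵢ(1) − Yᵢ(0))`. -/
theorem stmt2 (N N₁ : ℕ) (hN : 2 ≤ N) (h1 : 1 ≤ N₁) (h2 : N₁ ≤ N - 1)
    (Y1 Y0 : Fin N → ℝ) :
    crdExp N N₁ (tauhat N N₁ Y1 Y0) = (∑ i, (Y1 i - Y0 i)) / (N : ℝ) := by
  have hN1N : N₁ < N := by omega
  have hNne : (N : ℝ) ≠ 0 := Nat.cast_ne_zero.mpr (by omega)
  have hN1ne : (N₁ : ℝ) ≠ 0 := Nat.cast_ne_zero.mpr (by omega)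
  have hN0ne : ((N - N₁ : ℕ) : ℝ) ≠ 0 := Nat.cast_ne_zero.mpr (by omega)
  obtain ⟨i₀⟩ : Nonempty (Fin N) := ⟨⟨0, by omega⟩⟩
  obtain ⟨k, hk⟩ : ∃ k, (CRD N N₁).card = k := ⟨_, rfl⟩
  obtain ⟨c, hc⟩ : ∃ c, ((CRD N N₁).filter fun T => T i₀ = true).card = c := ⟨_, rfl⟩
  have hkpos : 0 < k := hk ▸ Finset.card_pos.mpr (crd_nonempty hN1N)
  -- N * c = N₁ * k
  have hNc : N * c = N₁ * k := by
    have h := double_count (N := N) (N₁ := N₁)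
    rw [Finset.sum_congr rfl (fun i _ => symm_count i i₀), hc, Finset.sum_const,
      Finset.card_univ, Fintype.card_fin, smul_eq_mul, hk] at h
    exact h
  have hcle : c ≤ k := by rw [← hc, ← hk]; exact Finset.card_filter_le _ _
  -- false counts
  have hfalse : ∀ i : Fin N, ((CRD N N₁).filter fun T => T i = false).card = k - c := by
    intro i
    have h := Finset.card_filter_add_card_filter_not
      (s := CRD N N₁) (p := fun T => T i = true)
    have he : ((CRD N N₁).filter fun T => ¬ T i = true)
        = (CRD N N₁).filter fun T => T i = false := by
      apply Finset.filter_congr; intro T _; simp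
    rw [he, symm_count i i₀, hc, hk] at h
    exact Nat.eq_sub_of_add_eq' h
  have hkne : (k : ℝ) ≠ 0 := Nat.cast_ne_zero.mpr hkpos.ne'
  have hNcR : (N : ℝ) * c = N₁ * k := by exact_mod_cast hNc
  -- key real ratios
  have hr1 : (c : ℝ) / N₁ = k / N := by
    rw [div_eq_div_iff hN1ne hNne]; linear_combination hNcR
  have hr0 : ((k - c : ℕ) : ℝ) / ((N - N₁ : ℕ) : ℝ) = k / N := by
    rw [div_eq_div_iff hN0ne hNne, Nat.cast_sub hcle, Nat.cast_sub hN1N.le]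
    linear_combination (-1 : ℝ) * hNcR
  -- inner sums
  have inner1 : ∀ i : Fin N, ∑ T ∈ CRD N N₁, (if T i then Y1 i else 0) = c * Y1 i := by
    intro i
    rw [← Finset.sum_filter, Finset.sum_const, nsmul_eq_mul, symm_count i i₀, hc]
  have inner0 : ∀ i : Fin N, ∑ T ∈ CRD N N₁, (if T i then 0 else Y0 i) = (k - c : ℕ) * Y0 i := by
    intro i
    have he : ∀ T : Fin N → Bool, (if T i then (0:ℝ) else Y0 i)
        = if T i = false then Y0 i else 0 := by
      intro T; cases h : T i <;> simp
    simp_rw [he]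
    rw [← Finset.sum_filter, Finset.sum_const, nsmul_eq_mul, hfalse i]
  -- compute the sum
  have hsum : ∑ T ∈ CRD N N₁, tauhat N N₁ Y1 Y0 T
      = (∑ i, Y1 i) * ((c : ℝ) / N₁)
        - (∑ i, Y0 i) * (((k - c : ℕ) : ℝ) / ((N - N₁ : ℕ) : ℝ)) := by
    unfold tauhat
    rw [Finset.sum_sub_distrib, ← Finset.sum_div, ← Finset.sum_div,
      Finset.sum_comm, Finset.sum_comm (s := CRD N N₁) (t := Finset.univ)]
    simp_rw [inner1, inner0]
    rw [← Finset.mul_sum, ← Finset.mul_sum]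
    ring
  rw [crdExp, hsum, hr1, hr0, hk]
  field_simp
  rw [Finset.sum_sub_distrib]
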